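/- arXiv:2002.02157 — 4 statements merged into one kernel-verified Lean document; each statement's English description precedes it below -/
import Mathlib

section
/- For every X ∈ ℝ^{n×2} one has ‖A(X)‖ ≤ 2‖X‖ (indeed ‖A(X)‖² ≤ 2‖X‖²). -/
open Matrix BigOperators

noncomputable section

/-- Frobenius inner product of matrices. -/
def frobInner {m k : ℕ} (X Y : Matrix (Fin m) (Fin k) ℝ) : ℝ :=
  ∑ i, ∑ j, X i j * Y i j

/-- Frobenius norm of a matrix. -/
def frobNorm {m k : ℕ} (X : Matrix (Fin m) (Fin k) ℝ) : ℝ :=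
  Real.sqrt (frobInner X X)

/-- The area integrand `𝒜(X) = √(1 + ‖X‖² + det(XᵀX))`. -/
def Area {n : ℕ} (X : Matrix (Fin n) (Fin 2) ℝ) : ℝ :=
  Real.sqrt (1 + frobInner X X + (Xᵀ * X).det)

/-- The symplectic matrix `J = [[0,1],[−1,0]]`. -/
def symJ : Matrix (Fin 2) (Fin 2) ℝ := !![0, 1; -1, 0]

/-- The gradient of a function on matrix space, given by entrywise partial derivatives. -/
def grad {n : ℕ} (f : Matrix (Fin n) (Fin 2) ℝ → ℝ) (X : Matrix (Fin n) (Fin 2) ℝ) :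
    Matrix (Fin n) (Fin 2) ℝ :=
  fun i j => deriv (fun t : ℝ => f (X + t • Matrix.single i j 1)) 0

/-- `A(X) = D𝒜(X)J`. -/
def matA {n : ℕ} (X : Matrix (Fin n) (Fin 2) ℝ) : Matrix (Fin n) (Fin 2) ℝ :=
  grad Area X * symJ

/-- `B(X) = XᵀD𝒜(X)J − 𝒜(X)J`. -/
def matB {n : ℕ} (X : Matrix (Fin n) (Fin 2) ℝ) : Matrix (Fin 2) (Fin 2) ℝ :=
  Xᵀ * grad Area X * symJ - Area X • symJ

-- auxiliary
lemma hasDerivAt_m {n : ℕ} (X : Matrix (Fin n) (Fin 2) ℝ) (i : Fin n) (j a b : Fin 2) :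
    HasDerivAt (fun t : ℝ => ∑ k, (X + t • Matrix.single i j 1 : Matrix (Fin n) (Fin 2) ℝ) k a *
        (X + t • Matrix.single i j 1 : Matrix (Fin n) (Fin 2) ℝ) k b)
      ((if j = a then X i b else 0) + (if j = b then X i a else 0)) 0 := by
  have e1 : ∑ k, Matrix.single i j (1:ℝ) k a * X k b = if j = a then X i b else 0 := by
    by_cases h : j = a <;> simp [Matrix.single, ite_and, h]
  have e2 : ∑ k, X k a * Matrix.single i j (1:ℝ) k b = if j = b then X i a else 0 := by
    by_cases h : j = b <;> simp [Matrix.single, ite_and, h, mul_comm]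
  have key : ∀ k, HasDerivAt (fun t : ℝ => (X + t • Matrix.single i j 1 : Matrix (Fin n) (Fin 2) ℝ) k a *
        (X + t • Matrix.single i j 1 : Matrix (Fin n) (Fin 2) ℝ) k b)
      (Matrix.single i j (1:ℝ) k a * X k b + X k a * Matrix.single i j (1:ℝ) k b) 0 := by
    intro k
    have h1 : HasDerivAt (fun t : ℝ => (X + t • Matrix.single i j 1 : Matrix (Fin n) (Fin 2) ℝ) k a)
        (Matrix.single i j (1:ℝ) k a) 0 := by
      have hf : (fun t : ℝ => (X + t • Matrix.single i j 1 : Matrix (Fin n) (Fin 2) ℝ) k a)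
          = fun t : ℝ => X k a + t * Matrix.single i j (1:ℝ) k a := by
        funext t; simp [Matrix.add_apply, Matrix.smul_apply, smul_eq_mul, Matrix.single, ite_and, mul_ite, mul_one, mul_zero]
      rw [hf]
      simpa using ((hasDerivAt_id (0:ℝ)).mul_const (Matrix.single i j (1:ℝ) k a)).const_add (X k a)
    have h2 : HasDerivAt (fun t : ℝ => (X + t • Matrix.single i j 1 : Matrix (Fin n) (Fin 2) ℝ) k b)
        (Matrix.single i j (1:ℝ) k b) 0 := by
      have hf : (fun t : ℝ => (X + t • Matrix.single i j 1 : Matrix (Fin n) (Fin 2) ℝ) k b)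
          = fun t : ℝ => X k b + t * Matrix.single i j (1:ℝ) k b := by
        funext t; simp [Matrix.add_apply, Matrix.smul_apply, smul_eq_mul, Matrix.single, ite_and, mul_ite, mul_one, mul_zero]
      rw [hf]
      simpa using ((hasDerivAt_id (0:ℝ)).mul_const (Matrix.single i j (1:ℝ) k b)).const_add (X k b)
    have := h1.fun_mul h2
    simpa using this
  have hsum := HasDerivAt.fun_sum (fun k (_ : k ∈ Finset.univ) => key k)
  rw [← e1, ← e2, ← Finset.sum_add_distrib]
  exact hsum


lemma cs_ineq {n : ℕ} (X : Matrix (Fin n) (Fin 2) ℝ) :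
    (∑ k, X k 0 * X k 1) * (∑ k, X k 1 * X k 0) ≤
      (∑ k, X k 0 * X k 0) * (∑ k, X k 1 * X k 1) := by
  have h := Finset.sum_mul_sq_le_sq_mul_sq Finset.univ (fun k => X k 0) (fun k => X k 1)
  have h2 : (∑ k, X k 1 * X k 0) = ∑ k, X k 0 * X k 1 := by
    exact Finset.sum_congr rfl fun k _ => mul_comm _ _
  rw [h2]
  calc (∑ k, X k 0 * X k 1) * (∑ k, X k 0 * X k 1) = (∑ k, X k 0 * X k 1)^2 := by ring
    _ ≤ (∑ k, (X k 0)^2) * (∑ k, (X k 1)^2) := h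
    _ = (∑ k, X k 0 * X k 0) * (∑ k, X k 1 * X k 1) := by
        congr 1 <;> exact Finset.sum_congr rfl fun k _ => (pow_two _)

lemma sum_sq_nonneg {n : ℕ} (X : Matrix (Fin n) (Fin 2) ℝ) (a : Fin 2) :
    0 ≤ ∑ k, X k a * X k a :=
  Finset.sum_nonneg fun k _ => mul_self_nonneg _

lemma G0_pos {n : ℕ} (X : Matrix (Fin n) (Fin 2) ℝ) :
    0 < 1 + ((∑ k, X k 0 * X k 0) + (∑ k, X k 1 * X k 1)) +
      ((∑ k, X k 0 * X k 0) * (∑ k, X k 1 * X k 1) - (∑ k, X k 0 * X k 1) * (∑ k, X k 1 * X k 0)) := by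
  have := cs_ineq X
  have h0 := sum_sq_nonneg X 0
  have h1 := sum_sq_nonneg X 1
  nlinarith

lemma grad_Area_eq {n : ℕ} (X : Matrix (Fin n) (Fin 2) ℝ) (i : Fin n) (j : Fin 2) :
    grad Area X i j =
      ((((if j = 0 then X i 0 else 0) + (if j = 0 then X i 0 else 0)) +
       ((if j = 1 then X i 1 else 0) + (if j = 1 then X i 1 else 0))) +
       ((((if j = 0 then X i 0 else 0) + (if j = 0 then X i 0 else 0)) * (∑ k, X k 1 * X k 1) +
        (∑ k, X k 0 * X k 0) * ((if j = 1 then X i 1 else 0) + (if j = 1 then X i 1 else 0))) -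
        ((((if j = 0 then X i 1 else 0) + (if j = 1 then X i 0 else 0)) * (∑ k, X k 1 * X k 0)) +
         ((∑ k, X k 0 * X k 1) * ((if j = 1 then X i 0 else 0) + (if j = 0 then X i 1 else 0)))))) /
      (2 * Real.sqrt (1 + ((∑ k, X k 0 * X k 0) + (∑ k, X k 1 * X k 1)) +
        ((∑ k, X k 0 * X k 0) * (∑ k, X k 1 * X k 1) - (∑ k, X k 0 * X k 1) * (∑ k, X k 1 * X k 0)))) := by
  have hm00 := hasDerivAt_m X i j 0 0
  have hm11 := hasDerivAt_m X i j 1 1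
  have hm01 := hasDerivAt_m X i j 0 1
  have hm10 := hasDerivAt_m X i j 1 0
  set Y : ℝ → Matrix (Fin n) (Fin 2) ℝ := fun t => X + t • Matrix.single i j 1 with hY
  have hval : ∀ a b : Fin 2, (∑ k, Y 0 k a * Y 0 k b) = ∑ k, X k a * X k b := by
    intro a b
    simp [hY]
  have hG : HasDerivAt (fun t => 1 + ((∑ k, Y t k 0 * Y t k 0) + (∑ k, Y t k 1 * Y t k 1)) +
      ((∑ k, Y t k 0 * Y t k 0) * (∑ k, Y t k 1 * Y t k 1) -
        (∑ k, Y t k 0 * Y t k 1) * (∑ k, Y t k 1 * Y t k 0)))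
      ((((if j = 0 then X i 0 else 0) + (if j = 0 then X i 0 else 0)) +
       ((if j = 1 then X i 1 else 0) + (if j = 1 then X i 1 else 0))) +
       ((((if j = 0 then X i 0 else 0) + (if j = 0 then X i 0 else 0)) * (∑ k, X k 1 * X k 1) +
        (∑ k, X k 0 * X k 0) * ((if j = 1 then X i 1 else 0) + (if j = 1 then X i 1 else 0))) -
        ((((if j = 0 then X i 1 else 0) + (if j = 1 then X i 0 else 0)) * (∑ k, X k 1 * X k 0)) +
         ((∑ k, X k 0 * X k 1) * ((if j = 1 then X i 0 else 0) + (if j = 0 then X i 1 else 0)))))) 0 := by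
    have := ((hm00.add hm11).const_add 1).add ((hm00.mul hm11).sub (hm01.mul hm10))
    rw [hval 0 0, hval 1 1, hval 0 1, hval 1 0] at this
    exact this
  have hG0 : (1 + ((∑ k, Y 0 k 0 * Y 0 k 0) + (∑ k, Y 0 k 1 * Y 0 k 1)) +
      ((∑ k, Y 0 k 0 * Y 0 k 0) * (∑ k, Y 0 k 1 * Y 0 k 1) -
        (∑ k, Y 0 k 0 * Y 0 k 1) * (∑ k, Y 0 k 1 * Y 0 k 0)))
      = 1 + ((∑ k, X k 0 * X k 0) + (∑ k, X k 1 * X k 1)) +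
      ((∑ k, X k 0 * X k 0) * (∑ k, X k 1 * X k 1) -
        (∑ k, X k 0 * X k 1) * (∑ k, X k 1 * X k 0)) := by
    rw [hval 0 0, hval 1 1, hval 0 1, hval 1 0]
  have hne : (1 + ((∑ k, Y 0 k 0 * Y 0 k 0) + (∑ k, Y 0 k 1 * Y 0 k 1)) +
      ((∑ k, Y 0 k 0 * Y 0 k 0) * (∑ k, Y 0 k 1 * Y 0 k 1) -
        (∑ k, Y 0 k 0 * Y 0 k 1) * (∑ k, Y 0 k 1 * Y 0 k 0))) ≠ 0 := by
    rw [hG0]; exact ne_of_gt (G0_pos X)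
  have hA := hG.sqrt hne
  rw [hG0] at hA
  have hfun : (fun t : ℝ => Area (Y t)) = fun t =>
      Real.sqrt (1 + ((∑ k, Y t k 0 * Y t k 0) + (∑ k, Y t k 1 * Y t k 1)) +
      ((∑ k, Y t k 0 * Y t k 0) * (∑ k, Y t k 1 * Y t k 1) -
        (∑ k, Y t k 0 * Y t k 1) * (∑ k, Y t k 1 * Y t k 0))) := by
    funext t
    unfold Area frobInner
    congr 1
    rw [Matrix.det_fin_two]
    simp [Matrix.mul_apply, Matrix.transpose_apply, Fin.sum_univ_two, Finset.sum_add_distrib]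
  show deriv (fun t : ℝ => Area (Y t)) 0 = _
  rw [hfun]
  exact hA.deriv


/-- For every `X ∈ ℝ^{n×2}` one has `‖A(X)‖ ≤ 2‖X‖` (indeed `‖A(X)‖² ≤ 2‖X‖²`). -/
theorem norm_matA_le {n : ℕ} (hn : 1 ≤ n) (X : Matrix (Fin n) (Fin 2) ℝ) :
    frobNorm (matA X) ^ 2 ≤ 2 * frobNorm X ^ 2 ∧ frobNorm (matA X) ≤ 2 * frobNorm X := by
  have hp0 := sum_sq_nonneg X 0
  have hq0 := sum_sq_nonneg X 1
  have hcs := cs_ineq X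
  have hr' : (∑ k, X k 1 * X k 0) = ∑ k, X k 0 * X k 1 :=
    Finset.sum_congr rfl fun k _ => mul_comm _ _
  set p : ℝ := ∑ k, X k 0 * X k 0 with hpdef
  set q : ℝ := ∑ k, X k 1 * X k 1 with hqdef
  set r : ℝ := ∑ k, X k 0 * X k 1 with hrdef
  rw [hr'] at hcs
  have hG0pos : (0:ℝ) < 1 + (p + q) + (p * q - r * r) := by nlinarith
  set s : ℝ := Real.sqrt (1 + (p + q) + (p * q - r * r)) with hsdef
  have hspos : 0 < s := Real.sqrt_pos.mpr hG0pos
  have hss : s * s = 1 + (p + q) + (p * q - r * r) := Real.mul_self_sqrt (le_of_lt hG0pos)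
  have g0 : ∀ i, grad Area X i 0 = ((1 + q) * X i 0 - r * X i 1) / s := by
    intro i
    rw [grad_Area_eq X i 0]
    rw [hr']
    simp only [show ((0:Fin 2) = 0) = True by simp, show ((0:Fin 2) = 1) = False by simp,
      if_true, if_false]
    rw [← hpdef, ← hqdef, ← hrdef, ← hsdef]
    rw [show ((X i 0 + X i 0 + (0 + 0)) + ((X i 0 + X i 0) * q + p * (0 + 0) -
        ((X i 1 + 0) * r + r * (0 + X i 1)))) = 2 * ((1 + q) * X i 0 - r * X i 1) by ring]
    rw [mul_div_mul_left _ _ (by norm_num : (2:ℝ) ≠ 0)]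
  have g1 : ∀ i, grad Area X i 1 = ((1 + p) * X i 1 - r * X i 0) / s := by
    intro i
    rw [grad_Area_eq X i 1]
    rw [hr']
    simp only [show ((1:Fin 2) = 1) = True by simp, show ((1:Fin 2) = 0) = False by simp,
      if_true, if_false]
    rw [← hpdef, ← hqdef, ← hrdef, ← hsdef]
    rw [show ((0 + 0 + (X i 1 + X i 1)) + ((0 + 0) * q + p * (X i 1 + X i 1) -
        ((0 + X i 0) * r + r * (X i 0 + 0)))) = 2 * ((1 + p) * X i 1 - r * X i 0) by ring]
    rw [mul_div_mul_left _ _ (by norm_num : (2:ℝ) ≠ 0)]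
  have hA0 : ∀ i, matA X i 0 = -(grad Area X i 1) := by
    intro i
    simp [matA, Matrix.mul_apply, symJ, Fin.sum_univ_two]
  have hA1 : ∀ i, matA X i 1 = grad Area X i 0 := by
    intro i
    simp [matA, Matrix.mul_apply, symJ, Fin.sum_univ_two]
  have hAA : frobInner (matA X) (matA X) =
      (∑ i, (((1 + p) * X i 1 - r * X i 0)^2 + ((1 + q) * X i 0 - r * X i 1)^2)) / (s * s) := by
    calc frobInner (matA X) (matA X)
        = ∑ i, (matA X i 0 * matA X i 0 + matA X i 1 * matA X i 1) := by
          unfold frobInner; exact Finset.sum_congr rfl fun i _ => by rw [Fin.sum_univ_two]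
      _ = ∑ i, ((((1 + p) * X i 1 - r * X i 0)^2 + ((1 + q) * X i 0 - r * X i 1)^2) / (s * s)) := by
          refine Finset.sum_congr rfl fun i _ => ?_
          rw [hA0 i, hA1 i, g0 i, g1 i]
          field_simp
      _ = _ := by rw [← Finset.sum_div]
  have hsum : (∑ i, (((1 + p) * X i 1 - r * X i 0)^2 + ((1 + q) * X i 0 - r * X i 1)^2))
      = ((r * r + (1 + q)^2) * p + ((1 + p)^2 + r * r) * q +
        (-(2 * (1 + p) * r) - 2 * (1 + q) * r) * r) := by
    calc ∑ i, (((1 + p) * X i 1 - r * X i 0)^2 + ((1 + q) * X i 0 - r * X i 1)^2)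
        = ∑ i, ((r * r + (1 + q)^2) * (X i 0 * X i 0) + ((1 + p)^2 + r * r) * (X i 1 * X i 1)
            + (-(2 * (1 + p) * r) - 2 * (1 + q) * r) * (X i 0 * X i 1)) :=
          Finset.sum_congr rfl fun i _ => by ring
      _ = (r * r + (1 + q)^2) * (∑ i, X i 0 * X i 0) + ((1 + p)^2 + r * r) * (∑ i, X i 1 * X i 1)
            + (-(2 * (1 + p) * r) - 2 * (1 + q) * r) * (∑ i, X i 0 * X i 1) := by
          rw [Finset.sum_add_distrib, Finset.sum_add_distrib, ← Finset.mul_sum, ← Finset.mul_sum,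
            ← Finset.mul_sum]
      _ = _ := by rw [← hpdef, ← hqdef, ← hrdef]
  have hXX : frobInner X X = p + q := by
    unfold frobInner
    calc ∑ i, ∑ j, X i j * X i j = ∑ i, (X i 0 * X i 0 + X i 1 * X i 1) :=
          Finset.sum_congr rfl fun i _ => by rw [Fin.sum_univ_two]
      _ = (∑ i, X i 0 * X i 0) + ∑ i, X i 1 * X i 1 := Finset.sum_add_distrib
      _ = p + q := by rw [← hpdef, ← hqdef]
  have hAAle : frobInner (matA X) (matA X) ≤ 2 * (p + q) := by
    rw [hAA, hsum, hss, div_le_iff₀ hG0pos]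
    nlinarith [sq_nonneg (p - q), sq_nonneg r, mul_nonneg hp0 hq0,
      mul_nonneg (sub_nonneg.2 hcs) (add_nonneg hp0 hq0)]
  have hAAnn : 0 ≤ frobInner (matA X) (matA X) :=
    Finset.sum_nonneg fun i _ => Finset.sum_nonneg fun j _ => mul_self_nonneg _
  have h1 : frobNorm (matA X) ^ 2 = frobInner (matA X) (matA X) := Real.sq_sqrt hAAnn
  have hXXnn : (0:ℝ) ≤ p + q := add_nonneg hp0 hq0
  have h2 : frobNorm X ^ 2 = frobInner X X := Real.sq_sqrt (by rw [hXX]; exact hXXnn)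
  have hnormXnn : 0 ≤ frobNorm X := Real.sqrt_nonneg _
  constructor
  · rw [h1, h2, hXX]; exact hAAle
  · have hle : frobInner (matA X) (matA X) ≤ (2 * frobNorm X)^2 := by
      have h4 : (2 * frobNorm X)^2 = 4 * (p + q) := by
        rw [mul_pow, h2, hXX]; norm_num
      rw [h4]; nlinarith [hAAle]
    calc frobNorm (matA X) = Real.sqrt (frobInner (matA X) (matA X)) := rfl
      _ ≤ Real.sqrt ((2 * frobNorm X)^2) := Real.sqrt_le_sqrt hle
      _ = 2 * frobNorm X := Real.sqrt_sq (by positivity)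


end
end

section
/- For every X ∈ ℝ^{n×2} one has (1 + ‖X‖²)/(2·𝒜(X)) ≤ ‖B(X)‖ ≤ 2·√(1 + ‖X‖²) ≤ 2(1 + ‖X‖). -/
open Matrix BigOperators

noncomputable section

variable {n : ℕ}

lemma area_arg (X : Matrix (Fin n) (Fin 2) ℝ) :
    1 + frobInner X X + (Xᵀ * X).det =
      1 + ((∑ r, X r 0 * X r 0) + (∑ r, X r 1 * X r 1)) +
        ((∑ r, X r 0 * X r 0) * (∑ r, X r 1 * X r 1) -
          (∑ r, X r 0 * X r 1) * (∑ r, X r 1 * X r 0)) := by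
  simp [frobInner, Matrix.det_fin_two, Matrix.mul_apply, Matrix.transpose_apply,
    Fin.sum_univ_two, Finset.sum_add_distrib]

lemma area_arg_ge_one (X : Matrix (Fin n) (Fin 2) ℝ) :
    1 ≤ 1 + frobInner X X + (Xᵀ * X).det := by
  rw [area_arg]
  have ha : 0 ≤ ∑ r, X r 0 * X r 0 := Finset.sum_nonneg fun r _ => mul_self_nonneg _
  have hc : 0 ≤ ∑ r, X r 1 * X r 1 := Finset.sum_nonneg fun r _ => mul_self_nonneg _
  have hb : (∑ r, X r 0 * X r 1) * (∑ r, X r 1 * X r 0) ≤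
      (∑ r, X r 0 * X r 0) * (∑ r, X r 1 * X r 1) := by
    have := Finset.sum_mul_sq_le_sq_mul_sq Finset.univ (fun r => X r 0) (fun r => X r 1)
    have h1 : (∑ r, X r 1 * X r 0) = ∑ r, X r 0 * X r 1 := by
      simp [mul_comm]
    rw [h1]
    simp only [pow_two] at this
    linarith
  nlinarith

lemma area_pos (X : Matrix (Fin n) (Fin 2) ℝ) : 0 < Area X :=
  Real.sqrt_pos.2 (lt_of_lt_of_le one_pos (area_arg_ge_one X))

lemma area_sq (X : Matrix (Fin n) (Fin 2) ℝ) :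
    Area X ^ 2 = 1 + ((∑ r, X r 0 * X r 0) + (∑ r, X r 1 * X r 1)) +
        ((∑ r, X r 0 * X r 0) * (∑ r, X r 1 * X r 1) -
          (∑ r, X r 0 * X r 1) * (∑ r, X r 1 * X r 0)) := by
  rw [← area_arg, Area, Real.sq_sqrt (le_trans zero_le_one (area_arg_ge_one X))]

lemma hasDerivAt_gram (X E : Matrix (Fin n) (Fin 2) ℝ) (a b : Fin 2) :
    HasDerivAt (fun t : ℝ => ∑ r, (X r a + t * E r a) * (X r b + t * E r b))
      (∑ r, (E r a * X r b + X r a * E r b)) 0 := by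
  apply HasDerivAt.fun_sum
  intro r _
  have h1 : HasDerivAt (fun t : ℝ => X r a + t * E r a) (E r a) 0 :=
    (hasDerivAt_mul_const (E r a)).const_add (X r a)
  have h2 : HasDerivAt (fun t : ℝ => X r b + t * E r b) (E r b) 0 :=
    (hasDerivAt_mul_const (E r b)).const_add (X r b)
  have := h1.fun_mul h2
  simpa using this

lemma hasDerivAt_area (X E : Matrix (Fin n) (Fin 2) ℝ) :
    HasDerivAt (fun t : ℝ => Area (X + t • E))
      (((∑ r, (E r 0 * X r 0 + X r 0 * E r 0)) + (∑ r, (E r 1 * X r 1 + X r 1 * E r 1)) +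
        ((∑ r, (E r 0 * X r 0 + X r 0 * E r 0)) * (∑ r, X r 1 * X r 1)
          + (∑ r, X r 0 * X r 0) * (∑ r, (E r 1 * X r 1 + X r 1 * E r 1))
          - ((∑ r, (E r 0 * X r 1 + X r 0 * E r 1)) * (∑ r, X r 1 * X r 0)
            + (∑ r, X r 0 * X r 1) * (∑ r, (E r 1 * X r 0 + X r 1 * E r 0)))))
        / (2 * Area X)) 0 := by
  set g : Fin 2 → Fin 2 → ℝ → ℝ := fun a b t => ∑ r, (X r a + t * E r a) * (X r b + t * E r b)
    with hg
  set d : Fin 2 → Fin 2 → ℝ := fun a b => ∑ r, (E r a * X r b + X r a * E r b) with hd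
  have hgab : ∀ a b, HasDerivAt (g a b) (d a b) 0 := fun a b => hasDerivAt_gram X E a b
  have hg0 : ∀ a b, g a b 0 = ∑ r, X r a * X r b := by intro a b; simp [hg]
  have hq : HasDerivAt (fun t => 1 + (g 0 0 t + g 1 1 t) + (g 0 0 t * g 1 1 t - g 0 1 t * g 1 0 t))
      (d 0 0 + d 1 1 + (d 0 0 * g 1 1 0 + g 0 0 0 * d 1 1 - (d 0 1 * g 1 0 0 + g 0 1 0 * d 1 0))) 0 := by
    exact (((hgab 0 0).add (hgab 1 1)).const_add 1).add
      (((hgab 0 0).mul (hgab 1 1)).sub ((hgab 0 1).mul (hgab 1 0)))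
  have hval : (1 : ℝ) + (g 0 0 0 + g 1 1 0) + (g 0 0 0 * g 1 1 0 - g 0 1 0 * g 1 0 0) ≠ 0 := by
    simp only [hg0]
    have := area_arg_ge_one X
    rw [area_arg] at this
    linarith
  have hsqrt := (Real.hasDerivAt_sqrt hval).comp 0 hq
  have harea : Real.sqrt (1 + (g 0 0 0 + g 1 1 0) + (g 0 0 0 * g 1 1 0 - g 0 1 0 * g 1 0 0)) = Area X := by
    simp only [hg0]; rw [Area, area_arg]
  have heq : (fun t : ℝ => Area (X + t • E)) =
      (fun t => Real.sqrt (1 + (g 0 0 t + g 1 1 t) + (g 0 0 t * g 1 1 t - g 0 1 t * g 1 0 t))) := by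
    funext t
    rw [Area, area_arg]
    simp [hg, Matrix.add_apply, Matrix.smul_apply, smul_eq_mul]
  rw [heq]
  refine HasDerivAt.congr_deriv hsqrt ?_
  rw [harea]
  simp only [hg0, hd]
  ring


lemma grad_area0 (X : Matrix (Fin n) (Fin 2) ℝ) (i : Fin n) :
    grad Area X i 0 =
      (X i 0 * (1 + ∑ r, X r 1 * X r 1) - X i 1 * ∑ r, X r 0 * X r 1) / Area X := by
  have h := (hasDerivAt_area X (Matrix.single i 0 1)).deriv
  rw [grad, h]
  have hb : (∑ r, X r 1 * X r 0) = ∑ r, X r 0 * X r 1 := by simp [mul_comm]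
  simp only [Matrix.single, Matrix.of_apply]
  simp [Finset.sum_add_distrib, Finset.sum_ite_eq, ← Finset.mul_sum, hb]
  rw [div_eq_div_iff (by linarith [area_pos X]) (area_pos X).ne']
  ring


lemma grad_area1 (X : Matrix (Fin n) (Fin 2) ℝ) (i : Fin n) :
    grad Area X i 1 =
      (X i 1 * (1 + ∑ r, X r 0 * X r 0) - X i 0 * ∑ r, X r 0 * X r 1) / Area X := by
  have h := (hasDerivAt_area X (Matrix.single i 1 1)).deriv
  rw [grad, h]
  have hb : (∑ r, X r 1 * X r 0) = ∑ r, X r 0 * X r 1 := by simp [mul_comm]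
  simp only [Matrix.single, Matrix.of_apply]
  simp [Finset.sum_add_distrib, Finset.sum_ite_eq, ← Finset.mul_sum, hb]
  rw [div_eq_div_iff (by linarith [area_pos X]) (area_pos X).ne']
  ring



lemma sum_col_grad (X : Matrix (Fin n) (Fin 2) ℝ) (k : Fin 2) :
    (∑ i, X i k * grad Area X i 0 =
      ((∑ r, X r k * X r 0) * (1 + ∑ r, X r 1 * X r 1)
        - (∑ r, X r k * X r 1) * ∑ r, X r 0 * X r 1) / Area X) ∧
    (∑ i, X i k * grad Area X i 1 =
      ((∑ r, X r k * X r 1) * (1 + ∑ r, X r 0 * X r 0)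
        - (∑ r, X r k * X r 0) * ∑ r, X r 0 * X r 1) / Area X) := by
  constructor
  · simp only [grad_area0]
    rw [Finset.sum_mul, Finset.sum_mul, ← Finset.sum_sub_distrib, Finset.sum_div]
    exact Finset.sum_congr rfl fun i _ => by ring
  · simp only [grad_area1]
    rw [Finset.sum_mul, Finset.sum_mul, ← Finset.sum_sub_distrib, Finset.sum_div]
    exact Finset.sum_congr rfl fun i _ => by ring

lemma matB_eq (X : Matrix (Fin n) (Fin 2) ℝ) :
    matB X = !![-(∑ r, X r 0 * X r 1) / Area X, -(1 + ∑ r, X r 1 * X r 1) / Area X;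
                (1 + ∑ r, X r 0 * X r 0) / Area X, (∑ r, X r 0 * X r 1) / Area X] := by
  have hA := (area_pos X).ne'
  have hsq := area_sq X
  have hb : (∑ r, X r 1 * X r 0) = ∑ r, X r 0 * X r 1 := by simp [mul_comm]
  rw [hb] at hsq
  ext k l
  fin_cases k <;> fin_cases l <;>
    simp [matB, Matrix.mul_apply, Matrix.sub_apply, Matrix.smul_apply, Matrix.transpose_apply,
      Fin.sum_univ_two, symJ, (sum_col_grad X 0).1, (sum_col_grad X 0).2,
      (sum_col_grad X 1).1, (sum_col_grad X 1).2, hb, smul_eq_mul] <;>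
    field_simp
  · ring
  · simp only [pow_two]; linear_combination -hsq
  · simp only [pow_two]; linear_combination hsq
  · ring


lemma real_bounds (a b c A : ℝ) (ha0 : 0 ≤ a) (hc0 : 0 ≤ c) (hb2 : b * b ≤ a * c)
    (hA : 0 < A) (hsq : A ^ 2 = 1 + (a + c) + (a * c - b * b)) :
    (1 + (a + c)) / (2 * A) ≤
        Real.sqrt ((b * b + (1 + c) * (1 + c) + ((1 + a) * (1 + a) + b * b)) / A ^ 2) ∧
      Real.sqrt ((b * b + (1 + c) * (1 + c) + ((1 + a) * (1 + a) + b * b)) / A ^ 2) ≤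
        2 * Real.sqrt (1 + (a + c)) ∧
      2 * Real.sqrt (1 + (a + c)) ≤ 2 * (1 + Real.sqrt (a + c)) := by
  have hA2 : (0:ℝ) < A ^ 2 := by positivity
  have ht : (0:ℝ) ≤ a * c - b * b := by linarith
  have hN0 : (0:ℝ) ≤ b * b + (1 + c) * (1 + c) + ((1 + a) * (1 + a) + b * b) := by
    nlinarith [mul_self_nonneg b, mul_self_nonneg (1 + a), mul_self_nonneg (1 + c)]
  refine ⟨?_, ?_, ?_⟩
  · rw [Real.le_sqrt (by positivity) (div_nonneg hN0 hA2.le), div_pow,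
      div_le_div_iff₀ (by positivity) hA2]
    have h4 : (1 + (a + c)) ^ 2 ≤
        4 * (b * b + (1 + c) * (1 + c) + ((1 + a) * (1 + a) + b * b)) := by
      nlinarith [sq_nonneg (a - c), mul_self_nonneg b]
    nlinarith [h4, hA2]
  · have h2 : 2 * Real.sqrt (1 + (a + c)) = Real.sqrt (4 * (1 + (a + c))) := by
      rw [show (4:ℝ) * (1 + (a + c)) = 2 ^ 2 * (1 + (a + c)) by ring,
        Real.sqrt_mul (by norm_num), Real.sqrt_sq (by norm_num)]
    rw [h2]
    apply Real.sqrt_le_sqrt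
    rw [div_le_iff₀ hA2, hsq]
    have h1 : (0:ℝ) ≤ (a + c) * (a * c - b * b) := mul_nonneg (by linarith) ht
    nlinarith [ht, h1, ha0, hc0, sq_nonneg (a + c)]
  · have hs : (0:ℝ) ≤ a + c := by linarith
    have h1 : Real.sqrt (1 + (a + c)) ≤ 1 + Real.sqrt (a + c) := by
      have h2 : Real.sqrt (1 + (a + c)) ≤ Real.sqrt ((1 + Real.sqrt (a + c)) ^ 2) := by
        apply Real.sqrt_le_sqrt
        nlinarith [Real.sq_sqrt hs, Real.sqrt_nonneg (a + c)]
      rwa [Real.sqrt_sq (by positivity)] at h2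
    linarith

/-- For every `X ∈ ℝ^{n×2}`:
`(1 + ‖X‖²)/(2·𝒜(X)) ≤ ‖B(X)‖ ≤ 2·√(1 + ‖X‖²) ≤ 2(1 + ‖X‖)`. -/
theorem norm_matB_bounds {n : ℕ} (hn : 1 ≤ n) (X : Matrix (Fin n) (Fin 2) ℝ) :
    (1 + frobNorm X ^ 2) / (2 * Area X) ≤ frobNorm (matB X) ∧
      frobNorm (matB X) ≤ 2 * Real.sqrt (1 + frobNorm X ^ 2) ∧
      2 * Real.sqrt (1 + frobNorm X ^ 2) ≤ 2 * (1 + frobNorm X) := by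
  have hA := area_pos X
  have hsq := area_sq X
  have hb : (∑ r, X r 1 * X r 0) = ∑ r, X r 0 * X r 1 := by simp [mul_comm]
  rw [hb] at hsq
  set a := ∑ r, X r 0 * X r 0 with ha_def
  set b := ∑ r, X r 0 * X r 1 with hb_def
  set c := ∑ r, X r 1 * X r 1 with hc_def
  have ha0 : 0 ≤ a := Finset.sum_nonneg fun r _ => mul_self_nonneg _
  have hc0 : 0 ≤ c := Finset.sum_nonneg fun r _ => mul_self_nonneg _
  have hb2 : b * b ≤ a * c := by
    have := Finset.sum_mul_sq_le_sq_mul_sq Finset.univ (fun r => X r 0) (fun r => X r 1)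
    simp only [pow_two] at this
    exact this
  have hXX : frobInner X X = a + c := by
    simp [frobInner, Fin.sum_univ_two, Finset.sum_add_distrib, ha_def, hc_def]
  have hX2 : frobNorm X ^ 2 = a + c := by
    rw [frobNorm, Real.sq_sqrt (by rw [hXX]; linarith), hXX]
  have hN : frobInner (matB X) (matB X) =
      (b * b + (1 + c) * (1 + c) + ((1 + a) * (1 + a) + b * b)) / Area X ^ 2 := by
    rw [matB_eq]
    simp only [frobInner, Fin.sum_univ_two, Matrix.cons_val', Matrix.cons_val_zero,
      Matrix.cons_val_one, Matrix.head_cons, Matrix.head_fin_const, Matrix.empty_val',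
      Matrix.cons_val_fin_one, Matrix.of_apply]
    field_simp
    simp only [ha_def, hb_def, hc_def, pow_two]
  have h := real_bounds a b c (Area X) ha0 hc0 hb2 hA hsq
  have hBnorm : frobNorm (matB X) =
      Real.sqrt ((b * b + (1 + c) * (1 + c) + ((1 + a) * (1 + a) + b * b)) / Area X ^ 2) := by
    rw [frobNorm, hN]
  have hXn : frobNorm X = Real.sqrt (a + c) := by rw [frobNorm, hXX]
  rw [hX2, hBnorm, hXn]
  exact h


end
end

section
/- For every X ∈ ℝ^{n×2} and every Y ∈ ℝ^{n×2} with rank(Y) = 1 and ‖Y‖ = 1, the function g(t) = 𝒜(X + tY) satisfies g''(0) ≥ 1/𝒜(X)³. -/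
open Matrix BigOperators

noncomputable section

/-- `D²f(X)[Y,Y]`: the second derivative at `t = 0` of `t ↦ f(X + tY)`. -/
def hess {n : ℕ} (f : Matrix (Fin n) (Fin 2) ℝ → ℝ)
    (X Y : Matrix (Fin n) (Fin 2) ℝ) : ℝ :=
  iteratedDeriv 2 (fun t : ℝ => f (X + t • Y)) 0

lemma quadratic_sqrt_bound (a b c : ℝ) (ha : 1 ≤ a)
    (hq : ∀ t : ℝ, 1 ≤ c + b * t + a * t ^ 2) :
    iteratedDeriv 2 (fun t : ℝ => Real.sqrt (c + b * t + a * t ^ 2)) 0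
      ≥ 1 / Real.sqrt c ^ 3 := by
  have hc : 1 ≤ c := by simpa using hq 0
  have hcpos : 0 < c := lt_of_lt_of_le one_pos hc
  have hqpos : ∀ t : ℝ, 0 < c + b * t + a * t ^ 2 :=
    fun t => lt_of_lt_of_le one_pos (hq t)
  have hS : 0 < Real.sqrt c := Real.sqrt_pos.2 hcpos
  -- discriminant bound
  have hdisc : b ^ 2 - 4 * a * (c - 1) ≤ 0 := by
    have h := discrim_le_zero (a := a) (b := b) (c := c - 1)
      (fun x => by nlinarith [hq x])
    rw [discrim] at h
    nlinarith [h]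
  have key : 4 ≤ 4 * a * c - b ^ 2 := by nlinarith
  -- derivative of the inner polynomial
  have hpoly : ∀ t : ℝ, HasDerivAt (fun x : ℝ => c + b * x + a * x ^ 2)
      (b + a * (2 * t)) t := by
    intro t
    have h := (((hasDerivAt_id t).const_mul b).const_add c).add
      ((hasDerivAt_pow 2 t).const_mul a)
    refine h.congr_deriv ?_
    push_cast
    ring
  have hf : ∀ t : ℝ, HasDerivAt (fun x : ℝ => Real.sqrt (c + b * x + a * x ^ 2))
      ((b + a * (2 * t)) / (2 * Real.sqrt (c + b * t + a * t ^ 2))) t := by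
    intro t
    have h := (Real.hasDerivAt_sqrt (ne_of_gt (hqpos t))).comp t (hpoly t)
    refine h.congr_deriv ?_
    ring
  have hd1 : deriv (fun x : ℝ => Real.sqrt (c + b * x + a * x ^ 2))
      = fun t : ℝ => (b + a * (2 * t)) / (2 * Real.sqrt (c + b * t + a * t ^ 2)) :=
    funext fun t => (hf t).deriv
  have hden : HasDerivAt (fun x : ℝ => 2 * Real.sqrt (c + b * x + a * x ^ 2))
      (2 * ((b + a * (2 * 0)) / (2 * Real.sqrt (c + b * 0 + a * 0 ^ 2)))) 0 :=
    (hf 0).const_mul 2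
  have hnum : HasDerivAt (fun x : ℝ => b + a * (2 * x)) (a * 2) 0 := by
    have h := (((hasDerivAt_id (0:ℝ)).const_mul 2).const_mul a).const_add b
    refine h.congr_deriv ?_
    ring
  have hne : 2 * Real.sqrt (c + b * 0 + a * 0 ^ 2) ≠ 0 := by
    have : c + b * 0 + a * 0 ^ 2 = c := by ring
    rw [this]
    positivity
  have hg : HasDerivAt (fun x : ℝ => (b + a * (2 * x)) / (2 * Real.sqrt (c + b * x + a * x ^ 2))) _ 0 := hnum.div hden hne
  rw [iteratedDeriv_succ, iteratedDeriv_one, hd1, hg.deriv]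
  have h0 : c + b * 0 + a * 0 ^ 2 = c := by ring
  rw [h0]
  set S := Real.sqrt c with hSdef
  have hc2 : S ^ 2 = c := Real.sq_sqrt hcpos.le
  have hSne : S ≠ 0 := ne_of_gt hS
  have hexp : (a * 2 * (2 * S) - (b + a * (2 * 0)) * (2 * ((b + a * (2 * 0)) / (2 * S)))) / (2 * S) ^ 2
      = (4 * a * S ^ 2 - b ^ 2) / (4 * S ^ 3) := by
    field_simp
    ring
  rw [ge_iff_le, hexp]
  have h1 : (1 : ℝ) / S ^ 3 = 4 / (4 * S ^ 3) := by
    rw [div_eq_div_iff (by positivity) (by positivity)]; ring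
  rw [h1]
  apply div_le_div_of_nonneg_right ?_ (by positivity) |>.trans_eq rfl
  rw [hc2]
  exact key

lemma sum_expand {n : ℕ} (x y u : Fin n → ℝ) (a b t : ℝ) :
    (∑ i, (x i + t * (u i * a)) * (y i + t * (u i * b)))
      = (∑ i, x i * y i)
        + t * (b * (∑ i, x i * u i) + a * (∑ i, y i * u i))
        + t ^ 2 * (a * b * (∑ i, u i * u i)) := by
  have h : ∀ i ∈ Finset.univ, (x i + t * (u i * a)) * (y i + t * (u i * b))
      = x i * y i + t * (b * (x i * u i)) + t * (a * (y i * u i))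
        + t ^ 2 * (a * b * (u i * u i)) := fun i _ => by ring
  rw [Finset.sum_congr rfl h]
  simp only [Finset.sum_add_distrib, ← Finset.mul_sum]
  ring

/-- For every `X ∈ ℝ^{n×2}` and rank-one `Y` with `‖Y‖ = 1`, the function `g(t) = 𝒜(X + tY)`
satisfies `g''(0) ≥ 1/𝒜(X)³`. -/
theorem area_second_deriv_lower_bound {n : ℕ} (hn : 1 ≤ n)
    (X Y : Matrix (Fin n) (Fin 2) ℝ) (hY : Y.rank = 1) (hYnorm : frobNorm Y = 1) :
    iteratedDeriv 2 (fun t : ℝ => Area (X + t • Y)) 0 ≥ 1 / Area X ^ 3 := by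
  classical
  -- Step 1: rank-one decomposition of Y
  obtain ⟨u, v, hYuv⟩ : ∃ (u : Fin n → ℝ) (v : Fin 2 → ℝ), ∀ i j, Y i j = u i * v j := by
    have hspan : Module.finrank ℝ (Submodule.span ℝ (Set.range Yᵀ)) = 1 := by
      exact (Matrix.rank_eq_finrank_span_cols Y).symm.trans hY
    have hf : ¬ LinearIndependent ℝ ![Yᵀ 0, Yᵀ 1] := by
      intro h
      have h2 := linearIndependent_iff_card_eq_finrank_span.mp h
      have hr : Set.range ![Yᵀ 0, Yᵀ 1] = Set.range Yᵀ := by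
        apply congrArg
        funext j
        fin_cases j <;> rfl
      rw [hr] at h2
      rw [Set.finrank, hspan] at h2
      simp at h2
    rw [linearIndependent_fin2] at hf
    push_neg at hf
    simp only [Matrix.cons_val_one, Matrix.head_cons, Matrix.cons_val_zero] at hf
    by_cases h1 : Yᵀ 1 = 0
    · refine ⟨fun i => Y i 0, ![1, 0], fun i j => ?_⟩
      fin_cases j
      · simp
      · have h2 := congrFun h1 i
        simp only [Matrix.transpose_apply, Pi.zero_apply] at h2
        simp [h2]
    · obtain ⟨a, ha⟩ := hf h1
      refine ⟨fun i => Y i 1, ![a, 1], fun i j => ?_⟩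
      fin_cases j
      · have h2 := congrFun ha i
        simp only [Pi.smul_apply, Matrix.transpose_apply, smul_eq_mul] at h2
        simp only [Fin.zero_eta, Fin.isValue, Nat.succ_eq_add_one, Nat.reduceAdd,
          Matrix.cons_val_zero]
        linear_combination -h2
      · simp
  -- Step 2: norm of Y
  have hY2 : frobInner Y Y = (v 0 ^ 2 + v 1 ^ 2) * (∑ i, u i * u i) := by
    simp only [frobInner, hYuv, Fin.sum_univ_two]
    have h : ∀ i ∈ Finset.univ, (u i * v 0) * (u i * v 0) + (u i * v 1) * (u i * v 1)
        = (v 0 ^ 2 + v 1 ^ 2) * (u i * u i) := fun i _ => by ring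
    rw [Finset.sum_congr rfl h, ← Finset.mul_sum]
  have hs1 : (v 0 ^ 2 + v 1 ^ 2) * (∑ i, u i * u i) = 1 := by
    rw [← hY2]
    have h := hYnorm
    rw [frobNorm, Real.sqrt_eq_one] at h
    exact h
  -- Step 3: the quadratic polynomial identity
  have hpoly : ∀ t : ℝ,
      1 + frobInner (X + t • Y) (X + t • Y) + ((X + t • Y)ᵀ * (X + t • Y)).det
        = (1 + ((∑ i, X i 0 * X i 0) + (∑ i, X i 1 * X i 1)) + ((∑ i, X i 0 * X i 0) * (∑ i, X i 1 * X i 1) - (∑ i, X i 0 * X i 1) * (∑ i, X i 0 * X i 1))) + (2 * (v 0 * (∑ i, X i 0 * u i) + v 1 * (∑ i, X i 1 * u i)) + 2 * (∑ i, X i 0 * X i 0) * (v 1 * (∑ i, X i 1 * u i)) + 2 * (∑ i, X i 1 * X i 1) * (v 0 * (∑ i, X i 0 * u i)) - 2 * (∑ i, X i 0 * X i 1) * (v 1 * (∑ i, X i 0 * u i) + v 0 * (∑ i, X i 1 * u i))) * t + ((v 0 ^ 2 + v 1 ^ 2) * (∑ i, u i * u i) + ((v 1 ^ 2 * (∑ i,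 X i 0 * X i 0) + v 0 ^ 2 * (∑ i, X i 1 * X i 1) - 2 * (v 0 * v 1) * (∑ i, X i 0 * X i 1)) * (∑ i, u i * u i) - (v 1 * (∑ i, X i 0 * u i) - v 0 * (∑ i, X i 1 * u i)) ^ 2)) * t ^ 2 := by
    intro t
    have hZ : ∀ i j, (X + t • Y) i j = X i j + t * (u i * v j) := by
      intro i j
      simp [Matrix.add_apply, Matrix.smul_apply, hYuv]
    rw [Matrix.det_fin_two]
    simp only [frobInner, Matrix.mul_apply, Matrix.transpose_apply, hZ, Fin.sum_univ_two]
    rw [Finset.sum_add_distrib]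
    simp only [sum_expand]
    rw [show (∑ i, X i 1 * X i 0) = ∑ i, X i 0 * X i 1 from
      Finset.sum_congr rfl fun i _ => mul_comm _ _]
    ring
  -- Step 4: leading coefficient is at least 1 (Cauchy–Schwarz)
  have hA : 1 ≤ ((v 0 ^ 2 + v 1 ^ 2) * (∑ i, u i * u i) + ((v 1 ^ 2 * (∑ i, X i 0 * X i 0) + v 0 ^ 2 * (∑ i, X i 1 * X i 1) - 2 * (v 0 * v 1) * (∑ i, X i 0 * X i 1)) * (∑ i, u i * u i) - (v 1 * (∑ i, X i 0 * u i) - v 0 * (∑ i, X i 1 * u i)) ^ 2)) := by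
    have hu2 : (∑ i, u i ^ 2) = (∑ i, u i * u i) := Finset.sum_congr rfl fun i _ => sq (u i)
    have hw2 : (∑ i, (v 1 * X i 0 - v 0 * X i 1) ^ 2)
        = v 1 ^ 2 * (∑ i, X i 0 * X i 0) + v 0 ^ 2 * (∑ i, X i 1 * X i 1) - 2 * (v 0 * v 1) * (∑ i, X i 0 * X i 1) := by
      have h : ∀ i ∈ Finset.univ, (v 1 * X i 0 - v 0 * X i 1) ^ 2
          = v 1 ^ 2 * (X i 0 * X i 0) + v 0 ^ 2 * (X i 1 * X i 1)
            + (-(2 * (v 0 * v 1))) * (X i 0 * X i 1) := fun i _ => by ring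
      rw [Finset.sum_congr rfl h]
      simp only [Finset.sum_add_distrib, ← Finset.mul_sum]
      ring
    have hwu : (∑ i, (v 1 * X i 0 - v 0 * X i 1) * u i) = v 1 * (∑ i, X i 0 * u i) - v 0 * (∑ i, X i 1 * u i) := by
      have h : ∀ i ∈ Finset.univ, (v 1 * X i 0 - v 0 * X i 1) * u i
          = v 1 * (X i 0 * u i) + (-v 0) * (X i 1 * u i) := fun i _ => by ring
      rw [Finset.sum_congr rfl h]
      simp only [Finset.sum_add_distrib, ← Finset.mul_sum]
      ring
    have hCS := Finset.sum_mul_sq_le_sq_mul_sq Finset.univ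
      (fun i => v 1 * X i 0 - v 0 * X i 1) u
    rw [hw2, hwu, hu2] at hCS
    linarith [hCS, hs1]
  -- Step 5: the polynomial is at least 1 everywhere
  have hq' : ∀ t : ℝ, 1 ≤ (1 + ((∑ i, X i 0 * X i 0) + (∑ i, X i 1 * X i 1)) + ((∑ i, X i 0 * X i 0) * (∑ i, X i 1 * X i 1) - (∑ i, X i 0 * X i 1) * (∑ i, X i 0 * X i 1))) + (2 * (v 0 * (∑ i, X i 0 * u i) + v 1 * (∑ i, X i 1 * u i)) + 2 * (∑ i, X i 0 * X i 0) * (v 1 * (∑ i, X i 1 * u i)) + 2 * (∑ i, X i 1 * X i 1) * (v 0 * (∑ i, X i 0 * u i)) - 2 * (∑ i, X i 0 * X i 1) * (v 1 * (∑ i, X i 0 * u i) + v 0 * (∑ i, X i 1 * u i))) * t + ((v 0 ^ 2 + v 1 ^ 2) * (∑ i, u i * u i) + ((v 1 ^ 2 * (∑ i, X i 0 * X i 0) + v 0 ^ 2 * (∑ i, X i 1 * X i 1) - 2 * (v 0 * v 1) * (∑ i, X i 0 * X i 1)) * (∑ i, u i * u i) - (v 1 * (∑ i, X i 0 * u i)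 - v 0 * (∑ i, X i 1 * u i)) ^ 2)) * t ^ 2 := by
    intro t
    rw [← hpoly t]
    set Z := X + t • Y with hZd
    have hF : 0 ≤ frobInner Z Z := by
      simp only [frobInner]
      apply Finset.sum_nonneg
      intro i _
      apply Finset.sum_nonneg
      intro j _
      exact mul_self_nonneg _
    have hdet : 0 ≤ (Zᵀ * Z).det := by
      rw [Matrix.det_fin_two]
      simp only [Matrix.mul_apply, Matrix.transpose_apply]
      rw [show (∑ i, Z i 1 * Z i 0) = ∑ i, Z i 0 * Z i 1 from
        Finset.sum_congr rfl fun i _ => mul_comm _ _]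
      have hCS2 := Finset.sum_mul_sq_le_sq_mul_sq Finset.univ (fun i => Z i 0) (fun i => Z i 1)
      have e0 : (∑ i, Z i 0 ^ 2) = ∑ i, Z i 0 * Z i 0 := Finset.sum_congr rfl fun i _ => sq _
      have e1 : (∑ i, Z i 1 ^ 2) = ∑ i, Z i 1 * Z i 1 := Finset.sum_congr rfl fun i _ => sq _
      rw [e0, e1] at hCS2
      nlinarith [hCS2, sq_nonneg (∑ i, Z i 0 * Z i 1)]
    linarith
  -- Step 6: identify Area X
  have hAX : Area X = Real.sqrt (1 + ((∑ i, X i 0 * X i 0) + (∑ i, X i 1 * X i 1)) + ((∑ i, X i 0 * X i 0) * (∑ i, X i 1 * X i 1) - (∑ i, X i 0 * X i 1) * (∑ i, X i 0 * X i 1))) := by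
    have h0 := hpoly 0
    rw [show X + (0:ℝ) • Y = X from by simp] at h0
    rw [Area, h0]
    congr 1
    ring
  -- Step 7: conclude
  have hfun : (fun t : ℝ => Area (X + t • Y))
      = fun t : ℝ => Real.sqrt ((1 + ((∑ i, X i 0 * X i 0) + (∑ i, X i 1 * X i 1)) + ((∑ i, X i 0 * X i 0) * (∑ i, X i 1 * X i 1) - (∑ i, X i 0 * X i 1) * (∑ i, X i 0 * X i 1))) + (2 * (v 0 * (∑ i, X i 0 * u i) + v 1 * (∑ i, X i 1 * u i)) + 2 * (∑ i, X i 0 * X i 0) * (v 1 * (∑ i, X i 1 * u i)) + 2 * (∑ i, X i 1 * X i 1) * (v 0 * (∑ i, X i 0 * u i)) - 2 * (∑ i, X i 0 * X i 1) * (v 1 * (∑ i, X i 0 * u i) + v 0 * (∑ i, X i 1 * u i))) * t + ((v 0 ^ 2 + v 1 ^ 2) * (∑ i, u i * u i) + ((v 1 ^ 2 * (∑ i, X i 0 * X i 0) + v 0 ^ 2 * (∑ i, X i 1 * X i 1) - 2 * (v 0 * v 1) * (∑ i, X i 0 * X i 1)) * (∑ i, u i * u i) - (v 1 * (∑ i,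 X i 0 * u i) - v 0 * (∑ i, X i 1 * u i)) ^ 2)) * t ^ 2) := by
    funext t
    rw [Area, hpoly t]
  rw [hfun, hAX]
  exact quadratic_sqrt_bound _ _ _ hA hq'

end
end

section
/- For every R > 0 there exist ε'(R) > 0 and τ' = τ'(R) > 0 such that: if f : ℝ^{n×2} → ℝ is of class C² and ‖f − 𝒜‖_{C²(B_{2R})} ≤ ε'(R), then D²f(X)[Y,Y] ≥ τ'·‖Y‖² for all X, Y ∈ ℝ^{n×2} with ‖X‖ ≤ 3R/2 and rank(Y) = 1. -/
open Matrix BigOperators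

noncomputable section

attribute [local instance] Matrix.frobeniusNormedAddCommGroup Matrix.frobeniusNormedSpace

/-! ### Auxiliary lemmas -/

lemma expand4 {n : ℕ} (g f1 f2 f3 f4 : Fin n → ℝ) (c1 c2 c3 c4 : ℝ)
    (h : ∀ k, g k = c1 * f1 k + c2 * f2 k + c3 * f3 k + c4 * f4 k) :
    ∑ k, g k = c1 * (∑ k, f1 k) + c2 * (∑ k, f2 k) + c3 * (∑ k, f3 k) + c4 * (∑ k, f4 k) := by
  simp only [Finset.mul_sum, ← Finset.sum_add_distrib]
  exact Finset.sum_congr rfl fun k _ => h k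

lemma cs_sum {n : ℕ} (x y : Fin n → ℝ) :
    (∑ k, x k * y k) ^ 2 ≤ (∑ k, x k * x k) * (∑ k, y k * y k) := by
  have h := Finset.sum_mul_sq_le_sq_mul_sq Finset.univ x y
  simpa [sq] using h

lemma frobInner_self_nonneg {m k : ℕ} (X : Matrix (Fin m) (Fin k) ℝ) : 0 ≤ frobInner X X :=
  Finset.sum_nonneg fun _ _ => Finset.sum_nonneg fun _ _ => mul_self_nonneg _

lemma frobNorm_sq {m k : ℕ} (X : Matrix (Fin m) (Fin k) ℝ) : frobNorm X ^ 2 = frobInner X X :=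
  Real.sq_sqrt (frobInner_self_nonneg X)

lemma frobNorm_nonneg {m k : ℕ} (X : Matrix (Fin m) (Fin k) ℝ) : 0 ≤ frobNorm X :=
  Real.sqrt_nonneg _

lemma frobInner_expand {n : ℕ} (W : Matrix (Fin n) (Fin 2) ℝ) :
    frobInner W W = (∑ k, W k 0 * W k 0) + (∑ k, W k 1 * W k 1) := by
  simp [frobInner, Fin.sum_univ_two, Finset.sum_add_distrib]

lemma gram_expand {n : ℕ} (W : Matrix (Fin n) (Fin 2) ℝ) :
    (Wᵀ * W).det = (∑ k, W k 0 * W k 0) * (∑ k, W k 1 * W k 1) -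
      (∑ k, W k 0 * W k 1) * (∑ k, W k 1 * W k 0) := by
  rw [Matrix.det_fin_two]
  simp [Matrix.mul_apply, Matrix.transpose_apply]

lemma gram_det_nonneg {n : ℕ} (W : Matrix (Fin n) (Fin 2) ℝ) : 0 ≤ (Wᵀ * W).det := by
  rw [gram_expand]
  have hsym : (∑ k, W k 1 * W k 0) = ∑ k, W k 0 * W k 1 :=
    Finset.sum_congr rfl fun k _ => mul_comm _ _
  rw [hsym]
  have := cs_sum (fun k => W k 0) (fun k => W k 1)
  nlinarith [this]

lemma gram_det_le {n : ℕ} (X : Matrix (Fin n) (Fin 2) ℝ) :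
    (Xᵀ * X).det ≤ (frobInner X X) ^ 2 := by
  rw [gram_expand, frobInner_expand]
  have h0 : 0 ≤ ∑ k, X k 0 * X k 0 := Finset.sum_nonneg fun _ _ => mul_self_nonneg _
  have h1 : 0 ≤ ∑ k, X k 1 * X k 1 := Finset.sum_nonneg fun _ _ => mul_self_nonneg _
  have hsym : (∑ k, X k 1 * X k 0) = ∑ k, X k 0 * X k 1 :=
    Finset.sum_congr rfl fun k _ => mul_comm _ _
  rw [hsym]
  nlinarith [sq_nonneg (∑ k, X k 0 * X k 1)]

/-- The key polynomial structure of `t ↦ 1 + ‖X+tY‖² + det((X+tY)ᵀ(X+tY))` for rank-one `Y`. -/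
lemma area_poly {n : ℕ} (X Y : Matrix (Fin n) (Fin 2) ℝ) (u : Fin n → ℝ) (v : Fin 2 → ℝ)
    (hY : ∀ i j, Y i j = u i * v j) :
    ∃ A B C : ℝ,
      (∀ t : ℝ, 1 + frobInner (X + t • Y) (X + t • Y) + ((X + t • Y)ᵀ * (X + t • Y)).det
          = A * t ^ 2 + B * t + C) ∧ frobNorm Y ^ 2 ≤ A := by
  refine ⟨(v 0 ^ 2 + v 1 ^ 2) * (∑ k, u k * u k) +
      ((∑ k, u k * u k) * (∑ k, (v 1 * X k 0 - v 0 * X k 1) * (v 1 * X k 0 - v 0 * X k 1)) -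
        (∑ k, u k * (v 1 * X k 0 - v 0 * X k 1)) ^ 2),
    2 * (v 0 * (∑ k, X k 0 * u k) + v 1 * (∑ k, X k 1 * u k)) +
      (2 * (∑ k, X k 0 * X k 0) * (v 1 * (∑ k, X k 1 * u k)) +
        2 * (∑ k, X k 1 * X k 1) * (v 0 * (∑ k, X k 0 * u k)) -
        2 * (∑ k, X k 0 * X k 1) * (v 1 * (∑ k, X k 0 * u k) + v 0 * (∑ k, X k 1 * u k))),
    1 + (∑ k, X k 0 * X k 0) + (∑ k, X k 1 * X k 1) +
      ((∑ k, X k 0 * X k 0) * (∑ k, X k 1 * X k 1) - (∑ k, X k 0 * X k 1) ^ 2), ?_, ?_⟩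
  · intro t
    have hW : ∀ i j, (X + t • Y) i j = X i j + t * (u i * v j) := by
      intro i j
      simp [Matrix.add_apply, Matrix.smul_apply, smul_eq_mul, hY]
    have hG : ∀ a b : Fin 2, (∑ k, (X + t • Y) k a * (X + t • Y) k b)
        = 1 * (∑ k, X k a * X k b) + (t * v b) * (∑ k, X k a * u k) +
          (t * v a) * (∑ k, X k b * u k) + (t ^ 2 * (v a * v b)) * (∑ k, u k * u k) := by
      intro a b
      exact expand4 _ _ _ _ _ _ _ _ _ (fun k => by simp only [hW]; ring)
    have hQ : (∑ k, (v 1 * X k 0 - v 0 * X k 1) * (v 1 * X k 0 - v 0 * X k 1))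
        = (v 1 ^ 2) * (∑ k, X k 0 * X k 0) + (-(2 * (v 0 * v 1))) * (∑ k, X k 0 * X k 1) +
          (v 0 ^ 2) * (∑ k, X k 1 * X k 1) + 0 * (∑ k, X k 0 * X k 0) :=
      expand4 _ _ _ _ _ _ _ _ _ (fun k => by ring)
    have hL : (∑ k, u k * (v 1 * X k 0 - v 0 * X k 1))
        = (v 1) * (∑ k, X k 0 * u k) + (-(v 0)) * (∑ k, X k 1 * u k) +
          0 * (∑ k, X k 0 * u k) + 0 * (∑ k, X k 0 * u k) :=
      expand4 _ _ _ _ _ _ _ _ _ (fun k => by ring)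
    have hsym : (∑ k, (X + t • Y) k 1 * (X + t • Y) k 0)
        = ∑ k, (X + t • Y) k 0 * (X + t • Y) k 1 :=
      Finset.sum_congr rfl fun k _ => mul_comm _ _
    rw [frobInner_expand, gram_expand, hsym, hG 0 0, hG 1 1, hG 0 1, hQ, hL]
    ring
  · have h2 : frobInner Y Y = (v 0 ^ 2 + v 1 ^ 2) * (∑ k, u k * u k) := by
      rw [frobInner_expand]
      have h00 : (∑ k, Y k 0 * Y k 0) = (v 0 ^ 2) * (∑ k, u k * u k) + 0 * (∑ k, u k * u k) +
          0 * (∑ k, u k * u k) + 0 * (∑ k, u k * u k) :=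
        expand4 _ _ _ _ _ _ _ _ _ (fun k => by simp only [hY]; ring)
      have h11 : (∑ k, Y k 1 * Y k 1) = (v 1 ^ 2) * (∑ k, u k * u k) + 0 * (∑ k, u k * u k) +
          0 * (∑ k, u k * u k) + 0 * (∑ k, u k * u k) :=
        expand4 _ _ _ _ _ _ _ _ _ (fun k => by simp only [hY]; ring)
      rw [h00, h11]; ring
    have hcs := cs_sum u (fun k => v 1 * X k 0 - v 0 * X k 1)
    rw [frobNorm_sq, h2]
    nlinarith [hcs]

/-- Second derivative at `0` of the square root of a quadratic polynomial bounded below by `1`. -/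
lemma second_deriv_sqrt_quad (A B C : ℝ) (h1 : ∀ t : ℝ, 1 ≤ A * t ^ 2 + B * t + C) :
    iteratedDeriv 2 (fun t : ℝ => Real.sqrt (A * t ^ 2 + B * t + C)) 0
      = (4 * A * C - B ^ 2) / (4 * C * Real.sqrt C) := by
  have hpos : ∀ t : ℝ, 0 < A * t ^ 2 + B * t + C := fun t => lt_of_lt_of_le one_pos (h1 t)
  have hC : 0 < C := by have := hpos 0; nlinarith
  have hsC : 0 < Real.sqrt C := Real.sqrt_pos.mpr hC
  have hq : ∀ t : ℝ, HasDerivAt (fun t : ℝ => A * t ^ 2 + B * t + C) (2 * A * t + B) t := by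
    intro t
    have h := (((hasDerivAt_pow 2 t).const_mul A).add ((hasDerivAt_id t).const_mul B)).add_const C
    refine h.congr_deriv ?_
    simp; ring
  have hg : ∀ t : ℝ, HasDerivAt (fun t : ℝ => Real.sqrt (A * t ^ 2 + B * t + C))
      ((2 * A * t + B) / (2 * Real.sqrt (A * t ^ 2 + B * t + C))) t := by
    intro t
    have h := (Real.hasDerivAt_sqrt (ne_of_gt (hpos t))).comp t (hq t)
    refine h.congr_deriv ?_
    field_simp
  have hderiv : deriv (fun t : ℝ => Real.sqrt (A * t ^ 2 + B * t + C))
      = fun t : ℝ => (2 * A * t + B) / (2 * Real.sqrt (A * t ^ 2 + B * t + C)) :=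
    funext fun t => (hg t).deriv
  rw [iteratedDeriv_succ, iteratedDeriv_one, hderiv]
  have hu : HasDerivAt (fun t : ℝ => 2 * A * t + B) (2 * A) 0 := by
    have h := ((hasDerivAt_id (0 : ℝ)).const_mul (2 * A)).add_const B
    refine h.congr_deriv ?_
    simp
  have hv : HasDerivAt (fun t : ℝ => 2 * Real.sqrt (A * t ^ 2 + B * t + C))
      (2 * ((2 * A * 0 + B) / (2 * Real.sqrt (A * 0 ^ 2 + B * 0 + C)))) 0 := (hg 0).const_mul 2
  have hvne : (2 * Real.sqrt (A * (0:ℝ) ^ 2 + B * 0 + C)) ≠ 0 := by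
    have := hpos 0
    positivity
  have hd := hu.div hv hvne
  rw [show deriv (fun t : ℝ => (2 * A * t + B) / (2 * Real.sqrt (A * t ^ 2 + B * t + C))) 0 = _ from hd.deriv]
  have h0 : A * (0:ℝ) ^ 2 + B * 0 + C = C := by ring
  rw [h0]
  have hCs : Real.sqrt C * Real.sqrt C = C := Real.mul_self_sqrt hC.le
  rw [div_eq_div_iff (by positivity) (by positivity)]
  field_simp
  ring_nf
  linear_combination (4 * B ^ 2) * hCs

lemma hess_area_ge {n : ℕ} (M : ℝ) (hM : 0 ≤ M) (X Y : Matrix (Fin n) (Fin 2) ℝ)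
    (u : Fin n → ℝ) (v : Fin 2 → ℝ) (hY : ∀ i j, Y i j = u i * v j)
    (hX : frobNorm X ≤ M) :
    frobNorm Y ^ 2 / ((1 + M ^ 2 + M ^ 4) * Real.sqrt (1 + M ^ 2 + M ^ 4))
      ≤ hess Area X Y := by
  obtain ⟨A, B, C, hmain, hA⟩ := area_poly X Y u v hY
  have h1 : ∀ t : ℝ, 1 ≤ A * t ^ 2 + B * t + C := by
    intro t
    rw [← hmain t]
    have h2 := frobInner_self_nonneg (X + t • Y)
    have h3 := gram_det_nonneg (X + t • Y)
    linarith
  have hC1 : (1 : ℝ) ≤ C := by have := h1 0; nlinarith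
  have hC0 : (0 : ℝ) < C := by linarith
  have hCval : C = 1 + frobInner X X + (Xᵀ * X).det := by
    have h := hmain 0
    simp only [zero_smul, add_zero, mul_zero, zero_pow, ne_eq, OfNat.ofNat_ne_zero,
      not_false_eq_true, zero_add] at h
    linarith [h]
  have hXX : frobInner X X ≤ M ^ 2 := by
    rw [← frobNorm_sq]
    exact pow_le_pow_left₀ (frobNorm_nonneg X) hX 2
  have hdetX : (Xᵀ * X).det ≤ M ^ 4 := by
    have h := gram_det_le X
    have h2 : (frobInner X X) ^ 2 ≤ (M ^ 2) ^ 2 := by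
      have := frobInner_self_nonneg X
      nlinarith
    nlinarith
  have hCK : C ≤ 1 + M ^ 2 + M ^ 4 := by rw [hCval]; linarith
  have hK1 : (1 : ℝ) ≤ 1 + M ^ 2 + M ^ 4 := by nlinarith [pow_nonneg hM 2, pow_nonneg hM 4]
  have hEq : hess Area X Y = (4 * A * C - B ^ 2) / (4 * C * Real.sqrt C) := by
    unfold hess
    rw [show (fun t : ℝ => Area (X + t • Y)) = fun t : ℝ => Real.sqrt (A * t ^ 2 + B * t + C)
      from funext fun t => by rw [Area, hmain t]]
    exact second_deriv_sqrt_quad A B C h1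
  have hdisc : B ^ 2 ≤ 4 * A * (C - 1) := by
    have h := discrim_le_zero (a := A) (b := B) (c := C - 1) (fun x => by nlinarith [h1 x])
    rw [discrim] at h
    linarith
  rw [hEq]
  have hsC : 0 < Real.sqrt C := Real.sqrt_pos.mpr hC0
  have hYnn : (0 : ℝ) ≤ frobNorm Y ^ 2 := sq_nonneg _
  have hnum : 4 * frobNorm Y ^ 2 ≤ 4 * A * C - B ^ 2 := by nlinarith
  have hden : 0 < 4 * C * Real.sqrt C := by positivity
  have hKpos : (0 : ℝ) < (1 + M ^ 2 + M ^ 4) * Real.sqrt (1 + M ^ 2 + M ^ 4) := by positivity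
  have hdenle : (1 + M ^ 2 + M ^ 4) * Real.sqrt (1 + M ^ 2 + M ^ 4) ≥ C * Real.sqrt C := by
    have hs := Real.sqrt_le_sqrt hCK
    have := Real.sqrt_nonneg C
    nlinarith
  calc frobNorm Y ^ 2 / ((1 + M ^ 2 + M ^ 4) * Real.sqrt (1 + M ^ 2 + M ^ 4))
      ≤ frobNorm Y ^ 2 / (C * Real.sqrt C) := by
        gcongr
      _ = (4 * frobNorm Y ^ 2) / (4 * C * Real.sqrt C) := by
        rw [mul_assoc]
        rw [mul_div_mul_left _ _ (by norm_num : (4:ℝ) ≠ 0)]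
      _ ≤ (4 * A * C - B ^ 2) / (4 * C * Real.sqrt C) := by gcongr

lemma rank_one_decomp {n : ℕ} {Y : Matrix (Fin n) (Fin 2) ℝ} (h : Y.rank = 1) :
    ∃ (u : Fin n → ℝ) (v : Fin 2 → ℝ), ∀ i j, Y i j = u i * v j := by
  unfold Matrix.rank at h
  obtain ⟨w, hw0, hw⟩ := finrank_eq_one_iff'.mp h
  have hcol : ∀ j : Fin 2, ∃ c : ℝ, c • (w : Fin n → ℝ) = Y.mulVec (Pi.single j 1) := by
    intro j
    obtain ⟨c, hc⟩ := hw ⟨Y.mulVec (Pi.single j 1), LinearMap.mem_range_self _ _⟩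
    exact ⟨c, congrArg Subtype.val hc⟩
  choose cvec hcvec using hcol
  refine ⟨fun i => (w : Fin n → ℝ) i, cvec, fun i j => ?_⟩
  have h1 : Y.mulVec (Pi.single j 1) i = Y i j := by simp [Matrix.mulVec_single]
  have h2 := congrFun (hcvec j) i
  simp only [Pi.smul_apply, smul_eq_mul] at h2
  rw [← h1, ← h2]
  ring

lemma hess_smul {n : ℕ} (f : Matrix (Fin n) (Fin 2) ℝ → ℝ) (hf : ContDiff ℝ 2 f)
    (X Z : Matrix (Fin n) (Fin 2) ℝ) (r : ℝ) :
    hess f X (r • Z) = r ^ 2 * hess f X Z := by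
  have hg : ContDiff ℝ 2 (fun t : ℝ => f (X + t • Z)) :=
    hf.comp (contDiff_const.add (contDiff_id.smul contDiff_const))
  have heq : (fun t : ℝ => f (X + t • (r • Z))) = fun t : ℝ => f (X + (r * t) • Z) := by
    funext t
    rw [smul_smul, mul_comm]
  have h0 : iteratedDeriv 2 (fun t : ℝ => f (X + (r * t) • Z)) 0
      = r ^ 2 • iteratedDeriv 2 (fun s : ℝ => f (X + s • Z)) (r * 0) :=
    congrFun (iteratedDeriv_comp_const_smul hg r) 0
  unfold hess
  rw [heq, h0, mul_zero, smul_eq_mul]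

lemma frobInner_smul {m k : ℕ} (c : ℝ) (Y : Matrix (Fin m) (Fin k) ℝ) :
    frobInner (c • Y) (c • Y) = c ^ 2 * frobInner Y Y := by
  unfold frobInner
  rw [Finset.mul_sum]
  refine Finset.sum_congr rfl fun i _ => ?_
  rw [Finset.mul_sum]
  refine Finset.sum_congr rfl fun j _ => ?_
  simp [Matrix.smul_apply, smul_eq_mul]
  ring

lemma frobNorm_pos {m k : ℕ} {Y : Matrix (Fin m) (Fin k) ℝ} (h : Y ≠ 0) : 0 < frobNorm Y := by
  rw [frobNorm, Real.sqrt_pos]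
  rcases (frobInner_self_nonneg Y).lt_or_eq with h1 | h1
  · exact h1
  · exfalso
    apply h
    have hz : ∀ i ∈ (Finset.univ : Finset (Fin m)), (∑ j, Y i j * Y i j) = 0 := by
      exact (Finset.sum_eq_zero_iff_of_nonneg
        (fun i _ => Finset.sum_nonneg fun j _ => mul_self_nonneg _)).mp h1.symm
    ext i j
    have hz2 := (Finset.sum_eq_zero_iff_of_nonneg (fun j _ => mul_self_nonneg (Y i j))).mp
      (hz i (Finset.mem_univ i)) j (Finset.mem_univ j)
    simpa [mul_self_eq_zero] using hz2

/-- For every `R > 0` there exist `ε'(R) > 0` and `τ' = τ'(R) > 0` such that every `C²` function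
`f` with `‖f − 𝒜‖_{C²(B_{2R})} ≤ ε'` satisfies `D²f(X)[Y,Y] ≥ τ'‖Y‖²` for all `X, Y` with
`‖X‖ ≤ 3R/2` and `rank(Y) = 1`. -/
theorem perturbed_legendre_hadamard {n : ℕ} (hn : 1 ≤ n) (R : ℝ) (hR : 0 < R) :
    ∃ ε' τ' : ℝ, 0 < ε' ∧ 0 < τ' ∧
      ∀ f : Matrix (Fin n) (Fin 2) ℝ → ℝ, ContDiff ℝ 2 f →
        (∀ X Z : Matrix (Fin n) (Fin 2) ℝ, frobNorm X ≤ 2 * R → frobNorm Z ≤ 1 →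
          |f X - Area X| + frobNorm (grad f X - grad Area X) +
              |hess f X Z - hess Area X Z| ≤ ε') →
        ∀ X Y : Matrix (Fin n) (Fin 2) ℝ, frobNorm X ≤ 3 * R / 2 → Y.rank = 1 →
          hess f X Y ≥ τ' * frobNorm Y ^ 2 := by
  set M : ℝ := 3 * R / 2 with hMdef
  have hM : 0 ≤ M := by positivity
  set K : ℝ := 1 + M ^ 2 + M ^ 4 with hKdef
  have hKpos : 0 < K := by positivity
  have hsKpos : 0 < Real.sqrt K := Real.sqrt_pos.mpr hKpos
  set τ : ℝ := (K * Real.sqrt K)⁻¹ with hτdef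
  have hτpos : 0 < τ := by positivity
  refine ⟨τ / 2, τ / 2, by positivity, by positivity, ?_⟩
  intro f hf hclose X Y hX hYrank
  obtain ⟨u, v, huv⟩ := rank_one_decomp hYrank
  have hY0 : Y ≠ 0 := by
    intro hcon
    rw [hcon, Matrix.rank_zero] at hYrank
    exact absurd hYrank (by norm_num)
  have hr : 0 < frobNorm Y := frobNorm_pos hY0
  set r : ℝ := frobNorm Y with hrdef
  set Z : Matrix (Fin n) (Fin 2) ℝ := r⁻¹ • Y with hZdef
  have hZuv : ∀ i j, Z i j = (r⁻¹ * u i) * v j := by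
    intro i j
    rw [hZdef]
    simp only [Matrix.smul_apply, smul_eq_mul]
    rw [huv]
    ring
  have hfrobY : frobInner Y Y = r ^ 2 := (frobNorm_sq Y).symm
  have hZnorm : frobNorm Z = 1 := by
    rw [frobNorm, hZdef, frobInner_smul, hfrobY]
    rw [show (r⁻¹) ^ 2 * r ^ 2 = 1 by field_simp]
    exact Real.sqrt_one
  have hAreaZ : 1 / (K * Real.sqrt K) ≤ hess Area X Z := by
    have h := hess_area_ge M hM X Z (fun i => r⁻¹ * u i) v hZuv (le_trans hX (le_of_eq rfl))
    rw [hZnorm] at h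
    simpa [hKdef] using h
  have hXle : frobNorm X ≤ 2 * R := le_trans hX (by linarith)
  have hcl := hclose X Z hXle (le_of_eq hZnorm)
  have habs : |hess f X Z - hess Area X Z| ≤ τ / 2 := by
    have h1 := abs_nonneg (f X - Area X)
    have h2 := frobNorm_nonneg (grad f X - grad Area X)
    linarith
  have hfZ : τ / 2 ≤ hess f X Z := by
    have h := (abs_le.mp habs).1
    have : τ = 1 / (K * Real.sqrt K) := by rw [hτdef, one_div]
    linarith [hAreaZ]
  have hYZ : Y = r • Z := by
    rw [hZdef, smul_inv_smul₀ (ne_of_gt hr)]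
  calc hess f X Y = r ^ 2 * hess f X Z := by
        conv_lhs => rw [hYZ]
        exact hess_smul f hf X Z r
    _ ≥ r ^ 2 * (τ / 2) := by
        apply mul_le_mul_of_nonneg_left hfZ (sq_nonneg r)
    _ = τ / 2 * frobNorm Y ^ 2 := by rw [hrdef]; ring

end
end
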